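/- arXiv:2410.18609 — 5 statements merged into one kernel-verified Lean document; each statement's English description precedes it below -/
import Mathlib

section
/- Let x : ℝ² → ℝ³ and ψ = (ψ₁,ψ₂) : ℝ² → ℝ² be twice differentiable maps, and set y = x ∘ ψ. At every point (t,s) where det J(t,s) > 0 and x_t × x_s ≠ 0 at ψ(t,s), the Weingarten matrix satisfies W_y(t,s) = J(t,s)⁻¹ · W_x(ψ(t,s)) · J(t,s), where J(t,s) is the Jacobian matrix of ψ at (t,s). -/
open Matrix

noncomputable section

/-- ℝ³ with the standard (Euclidean) inner product. -/
abbrev E3 := EuclideanSpace ℝ (Fin 3)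

/-- Cross product in ℝ³. -/
def cross (u v : E3) : E3 := WithLp.toLp 2 (crossProduct u v)

/-- Matrix–vector product `A·u`. -/
def mvec (A : Matrix (Fin 3) (Fin 3) ℝ) (u : E3) : E3 := WithLp.toLp 2 (A.mulVec u)

/-- First partial derivative `x_t` at `p`. -/
def pt (x : ℝ × ℝ → E3) (p : ℝ × ℝ) : E3 := fderiv ℝ x p (1, 0)

/-- First partial derivative `x_s` at `p`. -/
def ps (x : ℝ × ℝ → E3) (p : ℝ × ℝ) : E3 := fderiv ℝ x p (0, 1)

/-- Coefficient `E = x_t · x_t` of the first fundamental form. -/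
def coeffE (x : ℝ × ℝ → E3) (p : ℝ × ℝ) : ℝ := inner ℝ (pt x p) (pt x p)

/-- Coefficient `F = x_t · x_s` of the first fundamental form. -/
def coeffF (x : ℝ × ℝ → E3) (p : ℝ × ℝ) : ℝ := inner ℝ (pt x p) (ps x p)

/-- Coefficient `G = x_s · x_s` of the first fundamental form. -/
def coeffG (x : ℝ × ℝ → E3) (p : ℝ × ℝ) : ℝ := inner ℝ (ps x p) (ps x p)

/-- The first fundamental form `I_x = [[E,F],[F,G]]` at `p`. -/
def firstFF (x : ℝ × ℝ → E3) (p : ℝ × ℝ) : Matrix (Fin 2) (Fin 2) ℝ :=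
  !![coeffE x p, coeffF x p; coeffF x p, coeffG x p]

/-- The unit normal `n_x = (x_t × x_s)/‖x_t × x_s‖` at `p`. -/
def nrm (x : ℝ × ℝ → E3) (p : ℝ × ℝ) : E3 :=
  ‖cross (pt x p) (ps x p)‖⁻¹ • cross (pt x p) (ps x p)

/-- Coefficient `L = x_tt · n_x` of the second fundamental form. -/
def coeffL (x : ℝ × ℝ → E3) (p : ℝ × ℝ) : ℝ := inner ℝ (pt (pt x) p) (nrm x p)

/-- Coefficient `M = x_ts · n_x` of the second fundamental form. -/
def coeffM (x : ℝ × ℝ → E3) (p : ℝ × ℝ) : ℝ := inner ℝ (ps (pt x) p) (nrm x p)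

/-- Coefficient `N = x_ss · n_x` of the second fundamental form. -/
def coeffN (x : ℝ × ℝ → E3) (p : ℝ × ℝ) : ℝ := inner ℝ (ps (ps x) p) (nrm x p)

/-- The second fundamental form `II_x = [[L,M],[M,N]]` at `p`. -/
def secondFF (x : ℝ × ℝ → E3) (p : ℝ × ℝ) : Matrix (Fin 2) (Fin 2) ℝ :=
  !![coeffL x p, coeffM x p; coeffM x p, coeffN x p]

/-- The Weingarten matrix `W_x = I_x⁻¹ · II_x` at `p`. -/
def wein (x : ℝ × ℝ → E3) (p : ℝ × ℝ) : Matrix (Fin 2) (Fin 2) ℝ :=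
  (firstFF x p)⁻¹ * secondFF x p

/-- The Gauss curvature `K_x = (LN − M²)/(EG − F²)` at `p`. -/
def gauss (x : ℝ × ℝ → E3) (p : ℝ × ℝ) : ℝ :=
  (coeffL x p * coeffN x p - coeffM x p ^ 2) / (coeffE x p * coeffG x p - coeffF x p ^ 2)

/-- The mean curvature `H_x = (EN + GL − 2FM)/(2(EG − F²))` at `p`. -/
def mean (x : ℝ × ℝ → E3) (p : ℝ × ℝ) : ℝ :=
  (coeffE x p * coeffN x p + coeffG x p * coeffL x p - 2 * coeffF x p * coeffM x p) /
    (2 * (coeffE x p * coeffG x p - coeffF x p ^ 2))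

/-- The Jacobian matrix of `ψ : ℝ² → ℝ²` at `p`. -/
def jac (ψ : ℝ × ℝ → ℝ × ℝ) (p : ℝ × ℝ) : Matrix (Fin 2) (Fin 2) ℝ :=
  !![(fderiv ℝ ψ p (1, 0)).1, (fderiv ℝ ψ p (0, 1)).1;
     (fderiv ℝ ψ p (1, 0)).2, (fderiv ℝ ψ p (0, 1)).2]

open RealInnerProductSpace

lemma cross_bilin (a b c d : ℝ) (u v : E3) :
    cross (a • u + c • v) (b • u + d • v) = (a * d - c * b) • cross u v := by
  show WithLp.toLp 2 (crossProduct (a • u + c • v) (b • u + d • v)) = (a * d - c * b) • WithLp.toLp 2 (crossProduct u v)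
  ext i
  fin_cases i <;>
    simp [cross_apply, Pi.add_apply, Pi.smul_apply, smul_eq_mul] <;> ring

lemma inner_cross_left (u v : E3) : ⟪u, cross u v⟫ = 0 := by
  simp [cross, PiLp.inner_apply, RCLike.inner_apply, conj_trivial, cross_apply,
    Fin.sum_univ_three]
  ring

lemma inner_cross_right (u v : E3) : ⟪v, cross u v⟫ = 0 := by
  simp [cross, PiLp.inner_apply, RCLike.inner_apply, conj_trivial, cross_apply,
    Fin.sum_univ_three]
  ring

/-- the Weingarten matrix transforms as `W_y = J⁻¹ · W_x(ψ) · J`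
under an orientation-preserving reparametrization `y = x ∘ ψ`. -/
theorem weingarten_transform_under_reparametrization
    (x : ℝ × ℝ → E3) (hx : ContDiff ℝ 2 x)
    (ψ : ℝ × ℝ → ℝ × ℝ) (hψ : ContDiff ℝ 2 ψ) (p : ℝ × ℝ)
    (hJ : 0 < (jac ψ p).det)
    (hreg : cross (pt x (ψ p)) (ps x (ψ p)) ≠ 0) :
    wein (x ∘ ψ) p = (jac ψ p)⁻¹ * wein x (ψ p) * jac ψ p := by
  have hxd : Differentiable ℝ x := hx.differentiable (by norm_num)
  have hψd : Differentiable ℝ ψ := hψ.differentiable (by norm_num)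
  have hxd2 : Differentiable ℝ (fderiv ℝ x) :=
    (hx.fderiv_right (m := 1) (le_refl 2)).differentiable (by norm_num)
  have hψd2 : Differentiable ℝ (fderiv ℝ ψ) :=
    (hψ.fderiv_right (m := 1) (le_refl 2)).differentiable (by norm_num)
  obtain ⟨⟨a, c⟩, hac⟩ : ∃ w : ℝ × ℝ, fderiv ℝ ψ p (1, 0) = w := ⟨_, rfl⟩
  obtain ⟨⟨b, d⟩, hbd⟩ : ∃ w : ℝ × ℝ, fderiv ℝ ψ p (0, 1) = w := ⟨_, rfl⟩
  have hjac : jac ψ p = !![a, b; c, d] := by simp only [jac, hac, hbd]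
  have hlin : ∀ w : ℝ × ℝ, fderiv ℝ x (ψ p) w = w.1 • pt x (ψ p) + w.2 • ps x (ψ p) := by
    intro w
    have hw : w = w.1 • ((1:ℝ), (0:ℝ)) + w.2 • ((0:ℝ), (1:ℝ)) := by
      simp [Prod.ext_iff]
    conv_lhs => rw [hw]
    simp only [map_add, _root_.map_smul]
    rfl
  have hcomp : ∀ z w, fderiv ℝ (x ∘ ψ) z w = fderiv ℝ x (ψ z) (fderiv ℝ ψ z w) := by
    intro z w
    rw [fderiv_comp z (hxd _) (hψd z)]
    rfl
  -- first derivatives of the composition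
  have hyt : pt (x ∘ ψ) p = a • pt x (ψ p) + c • ps x (ψ p) := by
    rw [show pt (x ∘ ψ) p = fderiv ℝ x (ψ p) (fderiv ℝ ψ p (1, 0)) from hcomp p (1, 0),
      hac, hlin]
  have hys : ps (x ∘ ψ) p = b • pt x (ψ p) + d • ps x (ψ p) := by
    rw [show ps (x ∘ ψ) p = fderiv ℝ x (ψ p) (fderiv ℝ ψ p (0, 1)) from hcomp p (0, 1),
      hbd, hlin]
  -- first fundamental form entries
  have hEy : coeffE (x ∘ ψ) p = a * a * coeffE x (ψ p) + a * c * coeffF x (ψ p)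
      + c * a * coeffF x (ψ p) + c * c * coeffG x (ψ p) := by
    simp only [coeffE, coeffF, coeffG, hyt, inner_add_left, inner_add_right,
      real_inner_smul_left, real_inner_smul_right]
    rw [real_inner_comm (ps x (ψ p)) (pt x (ψ p))]
    ring
  have hFy : coeffF (x ∘ ψ) p = a * b * coeffE x (ψ p) + a * d * coeffF x (ψ p)
      + c * b * coeffF x (ψ p) + c * d * coeffG x (ψ p) := by
    simp only [coeffE, coeffF, coeffG, hyt, hys, inner_add_left, inner_add_right,
      real_inner_smul_left, real_inner_smul_right]
    rw [real_inner_comm (ps x (ψ p)) (pt x (ψ p))]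
    ring
  have hGy : coeffG (x ∘ ψ) p = b * b * coeffE x (ψ p) + b * d * coeffF x (ψ p)
      + d * b * coeffF x (ψ p) + d * d * coeffG x (ψ p) := by
    simp only [coeffE, coeffF, coeffG, hys, inner_add_left, inner_add_right,
      real_inner_smul_left, real_inner_smul_right]
    rw [real_inner_comm (ps x (ψ p)) (pt x (ψ p))]
    ring
  -- determinant
  have hdet' : (0:ℝ) < a * d - c * b := by
    have h2 : a * d - c * b = (jac ψ p).det := by
      rw [hjac, Matrix.det_fin_two_of]; ring
    rw [h2]; exact hJ
  -- the unit normal is unchanged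
  have hcr : cross (pt (x ∘ ψ) p) (ps (x ∘ ψ) p)
      = (a * d - c * b) • cross (pt x (ψ p)) (ps x (ψ p)) := by
    rw [hyt, hys, cross_bilin]
  have h0 : ‖cross (pt x (ψ p)) (ps x (ψ p))‖ ≠ 0 := norm_ne_zero_iff.2 hreg
  have hny : nrm (x ∘ ψ) p = nrm x (ψ p) := by
    simp only [nrm, hcr]
    rw [norm_smul, Real.norm_eq_abs, abs_of_pos hdet', smul_smul]
    congr 1
    field_simp
  -- orthogonality of first derivatives to the normal
  have hUn : ⟪pt x (ψ p), nrm x (ψ p)⟫ = 0 := by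
    rw [nrm, real_inner_smul_right, inner_cross_left, mul_zero]
  have hVn : ⟪ps x (ψ p), nrm x (ψ p)⟫ = 0 := by
    rw [nrm, real_inner_smul_right, inner_cross_right, mul_zero]
  have hWn : ∀ z : ℝ × ℝ, ⟪fderiv ℝ x (ψ p) z, nrm x (ψ p)⟫ = 0 := by
    intro z
    rw [hlin, inner_add_left, real_inner_smul_left, real_inner_smul_left, hUn, hVn]
    ring
  -- second derivative machinery
  have hA : ∀ w w' : ℝ × ℝ, fderiv ℝ (fun z => fderiv ℝ x z w') (ψ p) w
      = fderiv ℝ (fderiv ℝ x) (ψ p) w w' := by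
    intro w w'
    have h2 := ((hxd2 (ψ p)).hasFDerivAt.clm_apply (hasFDerivAt_const w' (ψ p))).fderiv
    rw [h2]
    simp
  have hsym : ∀ w w' : ℝ × ℝ, fderiv ℝ (fderiv ℝ x) (ψ p) w w'
      = fderiv ℝ (fderiv ℝ x) (ψ p) w' w :=
    second_derivative_symmetric (fun y => (hxd y).hasFDerivAt) (hxd2 (ψ p)).hasFDerivAt
  have hB : ∀ w w' : ℝ × ℝ, fderiv ℝ (fun z => fderiv ℝ (x ∘ ψ) z w') p w
      = fderiv ℝ (fderiv ℝ x) (ψ p) (fderiv ℝ ψ p w) (fderiv ℝ ψ p w')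
        + fderiv ℝ x (ψ p) (fderiv ℝ (fun z => fderiv ℝ ψ z w') p w) := by
    intro w w'
    have heq : (fun z => fderiv ℝ (x ∘ ψ) z w')
        = fun z => fderiv ℝ x (ψ z) (fderiv ℝ ψ z w') := funext fun z => hcomp z w'
    rw [heq]
    have hc : HasFDerivAt (fun z => fderiv ℝ x (ψ z))
        ((fderiv ℝ (fderiv ℝ x) (ψ p)).comp (fderiv ℝ ψ p)) p :=
      (hxd2 (ψ p)).hasFDerivAt.comp p (hψd p).hasFDerivAt
    have hu : HasFDerivAt (fun z => fderiv ℝ ψ z w')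
        ((fderiv ℝ (fderiv ℝ ψ) p).flip w') p := by
      simpa using ((hψd2 p).hasFDerivAt.clm_apply (hasFDerivAt_const w' p))
    rw [(hc.clm_apply hu).fderiv, hu.fderiv]
    simp only [ContinuousLinearMap.add_apply, ContinuousLinearMap.comp_apply,
      ContinuousLinearMap.flip_apply]
    abel
  have hIIy : ∀ w w' : ℝ × ℝ,
      ⟪fderiv ℝ (fun z => fderiv ℝ (x ∘ ψ) z w') p w, nrm x (ψ p)⟫
      = ⟪fderiv ℝ (fderiv ℝ x) (ψ p) (fderiv ℝ ψ p w) (fderiv ℝ ψ p w'), nrm x (ψ p)⟫ := by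
    intro w w'
    rw [hB, inner_add_left, hWn]
    ring
  have hbil : ∀ α β γ δ : ℝ,
      ⟪fderiv ℝ (fderiv ℝ x) (ψ p) (α • ((1:ℝ), (0:ℝ)) + β • ((0:ℝ), (1:ℝ)))
        (γ • ((1:ℝ), (0:ℝ)) + δ • ((0:ℝ), (1:ℝ))), nrm x (ψ p)⟫
      = α * γ * ⟪fderiv ℝ (fderiv ℝ x) (ψ p) (1, 0) (1, 0), nrm x (ψ p)⟫
      + α * δ * ⟪fderiv ℝ (fderiv ℝ x) (ψ p) (1, 0) (0, 1), nrm x (ψ p)⟫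
      + β * γ * ⟪fderiv ℝ (fderiv ℝ x) (ψ p) (0, 1) (1, 0), nrm x (ψ p)⟫
      + β * δ * ⟪fderiv ℝ (fderiv ℝ x) (ψ p) (0, 1) (0, 1), nrm x (ψ p)⟫ := by
    intro α β γ δ
    simp only [map_add, _root_.map_smul, ContinuousLinearMap.add_apply,
      ContinuousLinearMap.smul_apply, inner_add_left, real_inner_smul_left]
    ring
  -- second fundamental form coefficients of x
  have hLx : coeffL x (ψ p)
      = ⟪fderiv ℝ (fderiv ℝ x) (ψ p) (1, 0) (1, 0), nrm x (ψ p)⟫ := by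
    simp only [coeffL]
    congr 1
    show fderiv ℝ (pt x) (ψ p) (1, 0) = _
    rw [show pt x = fun z => fderiv ℝ x z ((1:ℝ), (0:ℝ)) from rfl, hA]
  have hMx : coeffM x (ψ p)
      = ⟪fderiv ℝ (fderiv ℝ x) (ψ p) (0, 1) (1, 0), nrm x (ψ p)⟫ := by
    simp only [coeffM]
    congr 1
    show fderiv ℝ (pt x) (ψ p) (0, 1) = _
    rw [show pt x = fun z => fderiv ℝ x z ((1:ℝ), (0:ℝ)) from rfl, hA]
  have hNx : coeffN x (ψ p)
      = ⟪fderiv ℝ (fderiv ℝ x) (ψ p) (0, 1) (0, 1), nrm x (ψ p)⟫ := by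
    simp only [coeffN]
    congr 1
    show fderiv ℝ (ps x) (ψ p) (0, 1) = _
    rw [show ps x = fun z => fderiv ℝ x z ((0:ℝ), (1:ℝ)) from rfl, hA]
  have hpair : ∀ α β : ℝ, ((α:ℝ), (β:ℝ)) = α • ((1:ℝ), (0:ℝ)) + β • ((0:ℝ), (1:ℝ)) := by
    intro α β
    simp [Prod.ext_iff]
  -- second fundamental form entries of the composition
  have hLy : coeffL (x ∘ ψ) p = a * a * coeffL x (ψ p) + a * c * coeffM x (ψ p)
      + c * a * coeffM x (ψ p) + c * c * coeffN x (ψ p) := by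
    show (inner ℝ (pt (pt (x ∘ ψ)) p) (nrm (x ∘ ψ) p) : ℝ) = _
    rw [hny]
    show ⟪fderiv ℝ (pt (x ∘ ψ)) p (1, 0), nrm x (ψ p)⟫ = _
    rw [show pt (x ∘ ψ) = fun z => fderiv ℝ (x ∘ ψ) z ((1:ℝ), (0:ℝ)) from rfl,
      hIIy (1, 0) (1, 0), hac, hpair a c, hbil, hsym (1, 0) (0, 1), ← hLx, ← hMx, ← hNx]
  have hMy : coeffM (x ∘ ψ) p = b * a * coeffL x (ψ p) + b * c * coeffM x (ψ p)
      + d * a * coeffM x (ψ p) + d * c * coeffN x (ψ p) := by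
    show (inner ℝ (ps (pt (x ∘ ψ)) p) (nrm (x ∘ ψ) p) : ℝ) = _
    rw [hny]
    show ⟪fderiv ℝ (pt (x ∘ ψ)) p (0, 1), nrm x (ψ p)⟫ = _
    rw [show pt (x ∘ ψ) = fun z => fderiv ℝ (x ∘ ψ) z ((1:ℝ), (0:ℝ)) from rfl,
      hIIy (0, 1) (1, 0), hac, hbd, hpair a c, hpair b d, hbil, hsym (1, 0) (0, 1),
      ← hLx, ← hMx, ← hNx]
  have hNy : coeffN (x ∘ ψ) p = b * b * coeffL x (ψ p) + b * d * coeffM x (ψ p)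
      + d * b * coeffM x (ψ p) + d * d * coeffN x (ψ p) := by
    show (inner ℝ (ps (ps (x ∘ ψ)) p) (nrm (x ∘ ψ) p) : ℝ) = _
    rw [hny]
    show ⟪fderiv ℝ (ps (x ∘ ψ)) p (0, 1), nrm x (ψ p)⟫ = _
    rw [show ps (x ∘ ψ) = fun z => fderiv ℝ (x ∘ ψ) z ((0:ℝ), (1:ℝ)) from rfl,
      hIIy (0, 1) (0, 1), hbd, hpair b d, hbil, hsym (1, 0) (0, 1), ← hLx, ← hMx, ← hNx]
  -- matrix identities
  have htr : (!![a, b; c, d])ᵀ = !![a, c; b, d] := by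
    ext i j
    fin_cases i <;> fin_cases j <;> rfl
  have hI : firstFF (x ∘ ψ) p = (jac ψ p)ᵀ * firstFF x (ψ p) * jac ψ p := by
    rw [hjac, htr]
    simp only [firstFF, Matrix.mul_fin_two]
    rw [hEy, hFy, hGy]
    ext i j
    fin_cases i <;> fin_cases j <;> simp <;> ring
  have hII : secondFF (x ∘ ψ) p = (jac ψ p)ᵀ * secondFF x (ψ p) * jac ψ p := by
    rw [hjac, htr]
    simp only [secondFF, Matrix.mul_fin_two]
    rw [hLy, hMy, hNy]
    ext i j
    fin_cases i <;> fin_cases j <;> simp <;> ring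
  -- final algebra
  have hdj : IsUnit ((jac ψ p)ᵀ).det := by
    rw [Matrix.det_transpose]
    exact isUnit_iff_ne_zero.2 (ne_of_gt hJ)
  have hT : ((jac ψ p)ᵀ)⁻¹ * (jac ψ p)ᵀ = 1 := Matrix.nonsing_inv_mul _ hdj
  simp only [wein]
  rw [hI, hII, Matrix.mul_inv_rev, Matrix.mul_inv_rev]
  simp only [Matrix.mul_assoc]
  rw [← Matrix.mul_assoc (((jac ψ p)ᵀ)⁻¹) ((jac ψ p)ᵀ), hT, Matrix.one_mul]
end
end

section
/- Let x : ℝ² → ℝ³ and ψ = (ψ₁,ψ₂) : ℝ² → ℝ² be twice differentiable maps, and set y = x ∘ ψ. At every point (t,s) where det J(t,s) > 0 and x_t × x_s ≠ 0 at ψ(t,s), the Gauss and mean curvatures are invariant under the reparametrization: K_y(t,s) = K_x(ψ(t,s)) and H_y(t,s) = H_x(ψ(t,s)), where J(t,s) is the Jacobian matrix of ψ at (t,s). -/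
open Matrix

noncomputable section

/-! ### Auxiliary lemmas -/

lemma aux_cross_comb (u v : E3) (a b c d : ℝ) :
    cross (a • u + c • v) (b • u + d • v) = (a * d - b * c) • cross u v := by
  ext i
  simp only [cross, cross_apply]
  have hs : ∀ (k : ℝ) (w : E3) (j : Fin 3), (k • w) j = k * w j := fun _ _ _ => rfl
  have ha : ∀ (w z : E3) (j : Fin 3), (w + z) j = w j + z j := fun _ _ _ => rfl
  fin_cases i <;> simp [hs, ha] <;> ring

lemma aux_inner_cross_left (u v : E3) : inner ℝ (cross u v) u = (0:ℝ) := by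
  simp only [cross, cross_apply, PiLp.inner_apply, RCLike.inner_apply, conj_trivial,
    Fin.sum_univ_three, Matrix.cons_val_zero, Matrix.cons_val_one, Matrix.head_cons,
    Matrix.cons_val_two, Matrix.tail_cons, Fin.isValue]
  ring

lemma aux_inner_cross_right (u v : E3) : inner ℝ (cross u v) v = (0:ℝ) := by
  simp only [cross, cross_apply, PiLp.inner_apply, RCLike.inner_apply, conj_trivial,
    Fin.sum_univ_three, Matrix.cons_val_zero, Matrix.cons_val_one, Matrix.head_cons,
    Matrix.cons_val_two, Matrix.tail_cons, Fin.isValue]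
  ring

lemma aux_clm_decomp {E : Type*} [NormedAddCommGroup E] [NormedSpace ℝ E]
    (L : ℝ × ℝ →L[ℝ] E) (v : ℝ × ℝ) : L v = v.1 • L (1, 0) + v.2 • L (0, 1) := by
  conv_lhs => rw [show v = v.1 • ((1:ℝ), (0:ℝ)) + v.2 • ((0:ℝ), (1:ℝ)) by simp [Prod.ext_iff]]
  rw [map_add, _root_.map_smul, _root_.map_smul]

/-- Key second-derivative computation: the normal component of the second
derivatives of `x ∘ ψ` is given by the second derivative of `x` applied to
the `ψ`-images of the directions. -/
lemma aux_snd (x : ℝ × ℝ → E3) (hx : ContDiff ℝ 2 x) (ψ : ℝ × ℝ → ℝ × ℝ)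
    (hψ : ContDiff ℝ 2 ψ) (p : ℝ × ℝ) (n : E3)
    (hXt : inner ℝ (pt x (ψ p)) n = (0:ℝ)) (hXs : inner ℝ (ps x (ψ p)) n = (0:ℝ))
    (v w : ℝ × ℝ) :
    (inner ℝ (fderiv ℝ (fun q => fderiv ℝ (x ∘ ψ) q v) p w) n : ℝ)
      = inner ℝ (fderiv ℝ (fderiv ℝ x) (ψ p) (fderiv ℝ ψ p w) (fderiv ℝ ψ p v)) n := by
  have hx1 : Differentiable ℝ x := hx.differentiable two_ne_zero
  have hψ1 : Differentiable ℝ ψ := hψ.differentiable two_ne_zero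
  have hx2 : Differentiable ℝ (fderiv ℝ x) := (hx.fderiv_right (m := 1) (le_refl _)).differentiable one_ne_zero
  have hψ2 : Differentiable ℝ (fderiv ℝ ψ) := (hψ.fderiv_right (m := 1) (le_refl _)).differentiable one_ne_zero
  have hchain : (fun q => fderiv ℝ (x ∘ ψ) q v)
      = fun q => (fderiv ℝ x (ψ q)) (fderiv ℝ ψ q v) := by
    funext q
    rw [fderiv_comp q (hx1 (ψ q)) (hψ1 q)]; rfl
  rw [hchain]
  have hc : DifferentiableAt ℝ (fun q => fderiv ℝ x (ψ q)) p := (hx2 (ψ p)).comp p (hψ1 p)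
  have hu : DifferentiableAt ℝ (fun q => fderiv ℝ ψ q v) p :=
    (hψ2 p).clm_apply (differentiableAt_const v)
  rw [fderiv_clm_apply hc hu]
  have hcomp : fderiv ℝ (fun q => fderiv ℝ x (ψ q)) p w
      = fderiv ℝ (fderiv ℝ x) (ψ p) (fderiv ℝ ψ p w) := by
    rw [show (fun q => fderiv ℝ x (ψ q)) = (fderiv ℝ x) ∘ ψ from rfl,
      fderiv_comp p (hx2 (ψ p)) (hψ1 p)]
    rfl
  simp only [ContinuousLinearMap.add_apply, ContinuousLinearMap.coe_comp', Function.comp_apply,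
    ContinuousLinearMap.flip_apply, inner_add_left, hcomp]
  rw [aux_clm_decomp (fderiv ℝ x (ψ p))]
  simp only [inner_add_left, real_inner_smul_left]
  rw [show fderiv ℝ x (ψ p) (1,0) = pt x (ψ p) from rfl,
      show fderiv ℝ x (ψ p) (0,1) = ps x (ψ p) from rfl, hXt, hXs]
  ring

lemma aux_ip (u v : E3) (a' b' c' d' : ℝ) :
    (inner ℝ (a' • u + c' • v) (b' • u + d' • v) : ℝ)
      = a' * b' * inner ℝ u u + (a' * d' + c' * b') * inner ℝ u v + c' * d' * inner ℝ v v := by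
  simp only [inner_add_left, inner_add_right, real_inner_smul_left, real_inner_smul_right,
    real_inner_comm v u]
  ring

/-- the Gauss and mean curvatures are invariant under an
orientation-preserving reparametrization `y = x ∘ ψ`. -/
theorem curvatures_invariant_under_reparametrization
    (x : ℝ × ℝ → E3) (hx : ContDiff ℝ 2 x)
    (ψ : ℝ × ℝ → ℝ × ℝ) (hψ : ContDiff ℝ 2 ψ) (p : ℝ × ℝ)
    (hJ : 0 < (jac ψ p).det)
    (hreg : cross (pt x (ψ p)) (ps x (ψ p)) ≠ 0) :
    gauss (x ∘ ψ) p = gauss x (ψ p) ∧ mean (x ∘ ψ) p = mean x (ψ p) := by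
  have hx1 : Differentiable ℝ x := hx.differentiable two_ne_zero
  have hψ1 : Differentiable ℝ ψ := hψ.differentiable two_ne_zero
  have hx2 : Differentiable ℝ (fderiv ℝ x) := (hx.fderiv_right (m := 1) (le_refl _)).differentiable one_ne_zero
  set q := ψ p with hq
  set a := (fderiv ℝ ψ p (1, 0)).1 with ha
  set c := (fderiv ℝ ψ p (1, 0)).2 with hc
  set b := (fderiv ℝ ψ p (0, 1)).1 with hb
  set d := (fderiv ℝ ψ p (0, 1)).2 with hd
  set Δ := a * d - b * c with hΔdef
  have hΔ : 0 < Δ := by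
    have : (jac ψ p).det = a * d - b * c := by
      rw [jac, Matrix.det_fin_two_of]
    rwa [this] at hJ
  set Xt := pt x q with hXt
  set Xs := ps x q with hXs
  -- first derivatives of the composition
  have h_pt : pt (x ∘ ψ) p = a • Xt + c • Xs := by
    rw [pt, fderiv_comp p (hx1 q) (hψ1 p), ContinuousLinearMap.coe_comp', Function.comp_apply,
      aux_clm_decomp (fderiv ℝ x q)]
    rfl
  have h_ps : ps (x ∘ ψ) p = b • Xt + d • Xs := by
    rw [ps, fderiv_comp p (hx1 q) (hψ1 p), ContinuousLinearMap.coe_comp', Function.comp_apply,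
      aux_clm_decomp (fderiv ℝ x q)]
    rfl
  -- the unit normal is invariant
  have hcrossy : cross (pt (x ∘ ψ) p) (ps (x ∘ ψ) p) = Δ • cross Xt Xs := by
    rw [h_pt, h_ps, aux_cross_comb]
  have hnrm : nrm (x ∘ ψ) p = nrm x q := by
    rw [nrm, nrm, hcrossy, norm_smul, Real.norm_eq_abs, abs_of_pos hΔ, mul_inv, smul_smul,
      mul_comm Δ⁻¹, mul_assoc, inv_mul_cancel₀ (ne_of_gt hΔ), mul_one]
  set n := nrm x q with hn
  -- orthogonality of the normal to the tangent vectors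
  have hXtn : inner ℝ Xt n = (0:ℝ) := by
    rw [hn, nrm, real_inner_smul_right, ← hXt, ← hXs,
      real_inner_comm, aux_inner_cross_left, mul_zero]
  have hXsn : inner ℝ Xs n = (0:ℝ) := by
    rw [hn, nrm, real_inner_smul_right, ← hXt, ← hXs,
      real_inner_comm, aux_inner_cross_right, mul_zero]
  -- the second derivative of x at q
  set B := fderiv ℝ (fderiv ℝ x) q with hB
  have hfd2 : ∀ v w : ℝ × ℝ, fderiv ℝ (fun r => fderiv ℝ x r v) q w = B w v := by
    intro v w
    rw [fderiv_clm_apply (hx2 q) (differentiableAt_const v)]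
    simp
    rfl
  have hsym : ∀ v w : ℝ × ℝ, B v w = B w v := by
    have := (hx.contDiffAt (x := q)).isSymmSndFDerivAt (by norm_num)
    exact fun v w => this v w
  -- identify second fundamental form coefficients of x with B
  have hLx : (inner ℝ (B (1,0) (1,0)) n : ℝ) = coeffL x q := by
    rw [coeffL, ← hn]; congr 1
    rw [show pt (pt x) q = fderiv ℝ (fun r => fderiv ℝ x r (1,0)) q (1,0) from rfl, hfd2]
  have hMx : (inner ℝ (B (0,1) (1,0)) n : ℝ) = coeffM x q := by
    rw [coeffM, ← hn]; congr 1
    rw [show ps (pt x) q = fderiv ℝ (fun r => fderiv ℝ x r (1,0)) q (0,1) from rfl, hfd2]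
  have hNx : (inner ℝ (B (0,1) (0,1)) n : ℝ) = coeffN x q := by
    rw [coeffN, ← hn]; congr 1
    rw [show ps (ps x) q = fderiv ℝ (fun r => fderiv ℝ x r (0,1)) q (0,1) from rfl, hfd2]
  -- bilinear expansion of inner ℝ (B u v) n
  have hBexp : ∀ u v : ℝ × ℝ, (inner ℝ (B u v) n : ℝ)
      = u.1 * v.1 * coeffL x q + (u.1 * v.2 + u.2 * v.1) * coeffM x q
        + u.2 * v.2 * coeffN x q := by
    intro u v
    have h1 : B u v = (u.1 * v.1) • B (1,0) (1,0) + (u.1 * v.2) • B (1,0) (0,1)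
        + (u.2 * v.1) • B (0,1) (1,0) + (u.2 * v.2) • B (0,1) (0,1) := by
      conv_lhs => rw [aux_clm_decomp B u]
      simp only [ContinuousLinearMap.add_apply, ContinuousLinearMap.coe_smul',
        Pi.smul_apply]
      rw [aux_clm_decomp (B (1,0)) v, aux_clm_decomp (B (0,1)) v]
      module
    rw [h1, hsym (1,0) (0,1)]
    simp only [inner_add_left, real_inner_smul_left, hLx, hMx, hNx]
    ring
  -- second fundamental form coefficients of the composition
  have hsec := aux_snd x hx ψ hψ p n hXtn hXsn
  have hLy : coeffL (x ∘ ψ) p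
      = a * a * coeffL x q + (a * c + c * a) * coeffM x q + c * c * coeffN x q := by
    rw [coeffL, hnrm,
      show pt (pt (x ∘ ψ)) p = fderiv ℝ (fun r => fderiv ℝ (x ∘ ψ) r (1,0)) p (1,0) from rfl,
      hsec (1,0) (1,0), ← hq, ← hB, hBexp]
  have hMy : coeffM (x ∘ ψ) p
      = b * a * coeffL x q + (b * c + d * a) * coeffM x q + d * c * coeffN x q := by
    rw [coeffM, hnrm,
      show ps (pt (x ∘ ψ)) p = fderiv ℝ (fun r => fderiv ℝ (x ∘ ψ) r (1,0)) p (0,1) from rfl,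
      hsec (1,0) (0,1), ← hq, ← hB, hBexp]
  have hNy : coeffN (x ∘ ψ) p
      = b * b * coeffL x q + (b * d + d * b) * coeffM x q + d * d * coeffN x q := by
    rw [coeffN, hnrm,
      show ps (ps (x ∘ ψ)) p = fderiv ℝ (fun r => fderiv ℝ (x ∘ ψ) r (0,1)) p (0,1) from rfl,
      hsec (0,1) (0,1), ← hq, ← hB, hBexp]
  -- first fundamental form coefficients of the composition
  have hEy : coeffE (x ∘ ψ) p
      = a * a * coeffE x q + (a * c + c * a) * coeffF x q + c * c * coeffG x q := by
    rw [coeffE, h_pt, aux_ip]; rfl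
  have hFy : coeffF (x ∘ ψ) p
      = a * b * coeffE x q + (a * d + c * b) * coeffF x q + c * d * coeffG x q := by
    rw [coeffF, h_pt, h_ps, aux_ip]; rfl
  have hGy : coeffG (x ∘ ψ) p
      = b * b * coeffE x q + (b * d + d * b) * coeffF x q + d * d * coeffG x q := by
    rw [coeffG, h_ps, aux_ip]; rfl
  -- conclusion
  have hΔ2 : Δ ^ 2 ≠ 0 := pow_ne_zero 2 (ne_of_gt hΔ)
  constructor
  · rw [gauss, gauss, hLy, hMy, hNy, hEy, hFy, hGy,
      show (a * a * coeffL x q + (a * c + c * a) * coeffM x q + c * c * coeffN x q)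
          * (b * b * coeffL x q + (b * d + d * b) * coeffM x q + d * d * coeffN x q)
          - (b * a * coeffL x q + (b * c + d * a) * coeffM x q + d * c * coeffN x q) ^ 2
        = Δ ^ 2 * (coeffL x q * coeffN x q - coeffM x q ^ 2) by rw [hΔdef]; ring,
      show (a * a * coeffE x q + (a * c + c * a) * coeffF x q + c * c * coeffG x q)
          * (b * b * coeffE x q + (b * d + d * b) * coeffF x q + d * d * coeffG x q)
          - (a * b * coeffE x q + (a * d + c * b) * coeffF x q + c * d * coeffG x q) ^ 2
        = Δ ^ 2 * (coeffE x q * coeffG x q - coeffF x q ^ 2) by rw [hΔdef]; ring,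
      mul_div_mul_left _ _ hΔ2]
  · rw [mean, mean, hLy, hMy, hNy, hEy, hFy, hGy,
      show (a * a * coeffE x q + (a * c + c * a) * coeffF x q + c * c * coeffG x q)
          * (b * b * coeffL x q + (b * d + d * b) * coeffM x q + d * d * coeffN x q)
          + (b * b * coeffE x q + (b * d + d * b) * coeffF x q + d * d * coeffG x q)
          * (a * a * coeffL x q + (a * c + c * a) * coeffM x q + c * c * coeffN x q)
          - 2 * (a * b * coeffE x q + (a * d + c * b) * coeffF x q + c * d * coeffG x q)
          * (b * a * coeffL x q + (b * c + d * a) * coeffM x q + d * c * coeffN x q)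
        = Δ ^ 2 * (coeffE x q * coeffN x q + coeffG x q * coeffL x q
            - 2 * coeffF x q * coeffM x q) by rw [hΔdef]; ring,
      show 2 * ((a * a * coeffE x q + (a * c + c * a) * coeffF x q + c * c * coeffG x q)
          * (b * b * coeffE x q + (b * d + d * b) * coeffF x q + d * d * coeffG x q)
          - (a * b * coeffE x q + (a * d + c * b) * coeffF x q + c * d * coeffG x q) ^ 2)
        = Δ ^ 2 * (2 * (coeffE x q * coeffG x q - coeffF x q ^ 2)) by rw [hΔdef]; ring,
      mul_div_mul_left _ _ hΔ2]
end
end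

section
/- Let x : ℝ² → ℝ³ be a twice differentiable map, let A be a real orthogonal 3×3 matrix and b ∈ ℝ³, and let ψ = (ψ₁,ψ₂) : ℝ² → ℝ² be a twice differentiable map such that A·x(t,s) + b = x(ψ(t,s)) for all (t,s) ∈ ℝ². Then at every point (t,s) where det J(t,s) > 0, x_t × x_s ≠ 0 at (t,s), and x_t × x_s ≠ 0 at ψ(t,s), one has K_x(t,s) = K_x(ψ(t,s)) and H_x(t,s) = det(A)·H_x(ψ(t,s)), where J(t,s) is the Jacobian matrix of ψ at (t,s). -/
open Matrix

noncomputable section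

/-! ### Auxiliary lemmas -/

/-- `A·-` as a continuous linear map on `E3`. -/
def AmapC (A : Matrix (Fin 3) (Fin 3) ℝ) : E3 →L[ℝ] E3 :=
  LinearMap.toContinuousLinearMap (Matrix.toEuclideanLin A)

lemma AmapC_apply (A : Matrix (Fin 3) (Fin 3) ℝ) (u : E3) : AmapC A u = mvec A u := rfl

lemma inner_eq_dot (u v : E3) : (inner ℝ u v : ℝ) = (u : Fin 3 → ℝ) ⬝ᵥ v := by
  simp [PiLp.inner_apply, dotProduct, RCLike.inner_apply, mul_comm]

lemma transpose_mulVec_cross (A : Matrix (Fin 3) (Fin 3) ℝ) (u v : Fin 3 → ℝ) :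
    Aᵀ.mulVec (crossProduct (A.mulVec u) (A.mulVec v)) = A.det • crossProduct u v := by
  ext i
  fin_cases i <;>
    simp [crossProduct, mulVec, dotProduct, det_fin_three, Fin.sum_univ_three] <;> ring

lemma inner_mvec {A : Matrix (Fin 3) (Fin 3) ℝ} (hA : Aᵀ * A = 1) (u v : E3) :
    (inner ℝ (mvec A u) (mvec A v) : ℝ) = inner ℝ u v := by
  rw [inner_eq_dot, inner_eq_dot]
  show A.mulVec u ⬝ᵥ A.mulVec v = u ⬝ᵥ v
  rw [Matrix.dotProduct_mulVec, ← Matrix.mulVec_transpose, Matrix.mulVec_mulVec, hA,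
    Matrix.one_mulVec]

lemma norm_mvec {A : Matrix (Fin 3) (Fin 3) ℝ} (hA : Aᵀ * A = 1) (u : E3) :
    ‖mvec A u‖ = ‖u‖ := by
  have h := inner_mvec hA u u
  rw [real_inner_self_eq_norm_sq, real_inner_self_eq_norm_sq] at h
  exact (sq_eq_sq₀ (norm_nonneg _) (norm_nonneg _)).mp h

lemma cross_mvec {A : Matrix (Fin 3) (Fin 3) ℝ} (hA : Aᵀ * A = 1) (u v : E3) :
    cross (mvec A u) (mvec A v) = A.det • mvec A (cross u v) := by
  have h2 : A * Aᵀ = 1 := mul_eq_one_comm.mp hA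
  have h3 := transpose_mulVec_cross A u v
  have h4 := congrArg A.mulVec h3
  rw [Matrix.mulVec_mulVec, h2, Matrix.one_mulVec, Matrix.mulVec_smul] at h4
  exact congrArg (WithLp.toLp 2) h4

lemma mvec_smul (A : Matrix (Fin 3) (Fin 3) ℝ) (r : ℝ) (w : E3) :
    mvec A (r • w) = r • mvec A w :=
  congrArg (WithLp.toLp 2) (Matrix.mulVec_smul A r w)

lemma cross_comb (u v : E3) (α β γ δ : ℝ) :
    cross (α • u + β • v) (γ • u + δ • v) = (α * δ - β * γ) • cross u v := by
  ext i
  fin_cases i <;>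
    simp [crossProduct, cross, PiLp.smul_apply, PiLp.add_apply, smul_eq_mul] <;> ring

lemma prod_decomp (z : ℝ × ℝ) : z = z.1 • ((1:ℝ), (0:ℝ)) + z.2 • ((0:ℝ), (1:ℝ)) := by
  ext <;> simp

lemma inner_comb (u v : E3) (α β γ δ : ℝ) :
    (inner ℝ (α • u + β • v) (γ • u + δ • v) : ℝ) =
      α * γ * inner ℝ u u + (α * δ + β * γ) * inner ℝ u v + β * δ * inner ℝ v v := by
  simp only [inner_add_left, inner_add_right, real_inner_smul_left, real_inner_smul_right,
    real_inner_comm v u]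
  ring

lemma fderiv_apply_decomp (x : ℝ × ℝ → E3) (q : ℝ × ℝ) (z : ℝ × ℝ) :
    fderiv ℝ x q z = z.1 • pt x q + z.2 • ps x q := by
  conv_lhs => rw [prod_decomp z]
  rw [map_add, ContinuousLinearMap.map_smul, ContinuousLinearMap.map_smul]
  rfl

lemma tangent_orth (x : ℝ × ℝ → E3) (q : ℝ × ℝ) (z : ℝ × ℝ) :
    (inner ℝ (fderiv ℝ x q z) (nrm x q) : ℝ) = 0 := by
  rw [fderiv_apply_decomp, nrm]
  simp only [inner_add_left, real_inner_smul_left, real_inner_smul_right, inner_eq_dot, cross]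
  rw [dot_self_cross, dot_cross_self]
  ring

lemma fderiv_eval (f : ℝ × ℝ → E3) (p : ℝ × ℝ) (h : DifferentiableAt ℝ (fderiv ℝ f) p)
    (w₁ w₂ : ℝ × ℝ) :
    fderiv ℝ (fun q => fderiv ℝ f q w₂) p w₁ = fderiv ℝ (fderiv ℝ f) p w₁ w₂ := by
  rw [fderiv_clm_apply h (differentiableAt_const w₂)]
  simp

lemma sq_one_id {ε : ℝ} (X Y Z : ℝ) (hε : ε ^ 2 = 1) :
    (ε * X) * (ε * Y) - (ε * Z) ^ 2 = X * Y - Z ^ 2 := by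
  linear_combination (X * Y - Z ^ 2) * hε

/-- if `A·x + b = x ∘ ψ`, then `K_x = K_x(ψ)` and
`H_x = det(A)·H_x(ψ)`. -/
theorem curvature_relations_of_symmetry
    (x : ℝ × ℝ → E3) (hx : ContDiff ℝ 2 x)
    (A : Matrix (Fin 3) (Fin 3) ℝ) (hA : Aᵀ * A = 1) (b : E3)
    (ψ : ℝ × ℝ → ℝ × ℝ) (hψ : ContDiff ℝ 2 ψ)
    (hcomm : ∀ p : ℝ × ℝ, mvec A (x p) + b = x (ψ p)) (p : ℝ × ℝ)
    (hJ : 0 < (jac ψ p).det)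
    (hreg : cross (pt x p) (ps x p) ≠ 0)
    (hreg' : cross (pt x (ψ p)) (ps x (ψ p)) ≠ 0) :
    gauss x p = gauss x (ψ p) ∧ mean x p = A.det * mean x (ψ p) := by
  -- differentiability facts
  have hxd : Differentiable ℝ x := hx.differentiable two_ne_zero
  have hψd : Differentiable ℝ ψ := hψ.differentiable two_ne_zero
  have hxd1 : Differentiable ℝ (fderiv ℝ x) :=
    (hx.fderiv_right (m := 1) (by norm_num)).differentiable one_ne_zero
  have hψd1 : Differentiable ℝ (fderiv ℝ ψ) :=
    (hψ.fderiv_right (m := 1) (by norm_num)).differentiable one_ne_zero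
  have hdiffx : ∀ (w r : ℝ × ℝ), DifferentiableAt ℝ (fun q => fderiv ℝ x q w) r :=
    fun w r => (ContinuousLinearMap.apply ℝ E3 w).differentiableAt.comp r (hxd1 r)
  have hdiffψ : ∀ (w r : ℝ × ℝ), DifferentiableAt ℝ (fun q => fderiv ℝ ψ q w) r :=
    fun w r => (ContinuousLinearMap.apply ℝ (ℝ × ℝ) w).differentiableAt.comp r (hψd1 r)
  have hfun : (fun q => AmapC A (x q) + b) = x ∘ ψ := funext fun q => hcomm q
  -- first-order chain rule identity
  have hD1' : ∀ (q w : ℝ × ℝ), mvec A (fderiv ℝ x q w) = fderiv ℝ x (ψ q) (fderiv ℝ ψ q w) := by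
    intro q w
    have h1 : fderiv ℝ (fun q => AmapC A (x q) + b) q = (AmapC A).comp (fderiv ℝ x q) := by
      rw [fderiv_add_const]
      exact ((AmapC A).hasFDerivAt.comp q (hxd q).hasFDerivAt).fderiv
    have h2 : fderiv ℝ (x ∘ ψ) q = (fderiv ℝ x (ψ q)).comp (fderiv ℝ ψ q) :=
      fderiv_comp q (hxd _) (hψd q)
    have h3 : (AmapC A).comp (fderiv ℝ x q) = (fderiv ℝ x (ψ q)).comp (fderiv ℝ ψ q) := by
      rw [← h1, hfun, h2]
    exact congrFun (congrArg DFunLike.coe h3) w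
  -- second-order chain rule identity
  have hD2 : ∀ w₁ w₂ : ℝ × ℝ, mvec A (fderiv ℝ (fun q => fderiv ℝ x q w₂) p w₁)
      = fderiv ℝ (fderiv ℝ x) (ψ p) (fderiv ℝ ψ p w₁) (fderiv ℝ ψ p w₂)
        + fderiv ℝ x (ψ p) (fderiv ℝ (fun q => fderiv ℝ ψ q w₂) p w₁) := by
    intro w₁ w₂
    have hfun2 : (fun q => AmapC A (fderiv ℝ x q w₂)) =
        fun q => fderiv ℝ x (ψ q) (fderiv ℝ ψ q w₂) := funext fun q => hD1' q w₂
    have hl : fderiv ℝ (fun q => AmapC A (fderiv ℝ x q w₂)) p =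
        (AmapC A).comp (fderiv ℝ (fun q => fderiv ℝ x q w₂) p) :=
      ((AmapC A).hasFDerivAt.comp p (hdiffx w₂ p).hasFDerivAt).fderiv
    have hc : DifferentiableAt ℝ (fun q => fderiv ℝ x (ψ q)) p := (hxd1 (ψ p)).comp p (hψd p)
    have hu : DifferentiableAt ℝ (fun q => fderiv ℝ ψ q w₂) p := hdiffψ w₂ p
    have hr : fderiv ℝ (fun q => fderiv ℝ x (ψ q) (fderiv ℝ ψ q w₂)) p =
        (fderiv ℝ x (ψ p)).comp (fderiv ℝ (fun q => fderiv ℝ ψ q w₂) p) +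
          (fderiv ℝ (fun q => fderiv ℝ x (ψ q)) p).flip (fderiv ℝ ψ p w₂) :=
      fderiv_clm_apply hc hu
    have hcc : fderiv ℝ (fun q => fderiv ℝ x (ψ q)) p =
        (fderiv ℝ (fderiv ℝ x) (ψ p)).comp (fderiv ℝ ψ p) :=
      fderiv_comp p (hxd1 (ψ p)) (hψd p)
    calc mvec A (fderiv ℝ (fun q => fderiv ℝ x q w₂) p w₁)
        = fderiv ℝ (fun q => AmapC A (fderiv ℝ x q w₂)) p w₁ := by rw [hl]; rfl
      _ = fderiv ℝ (fun q => fderiv ℝ x (ψ q) (fderiv ℝ ψ q w₂)) p w₁ := by rw [hfun2]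
      _ = _ := by
          rw [hr, hcc]
          simp [ContinuousLinearMap.flip_apply]
          abel
  -- determinant facts
  have hdet2 : A.det ^ 2 = 1 := by
    have h := congrArg Matrix.det hA
    rwa [Matrix.det_mul, Matrix.det_transpose, ← sq, Matrix.det_one] at h
  have habs : |A.det| = 1 := by
    have h9 : |A.det| ^ 2 = 1 := by rw [sq_abs]; exact hdet2
    have h10 : (|A.det| - 1) * (|A.det| + 1) = 0 := by linear_combination h9
    rcases mul_eq_zero.mp h10 with h | h
    · linarith
    · have := abs_nonneg A.det; linarith
  -- Jacobian determinant
  have hkpos : 0 < (fderiv ℝ ψ p (1, 0)).1 * (fderiv ℝ ψ p (0, 1)).2 -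
      (fderiv ℝ ψ p (1, 0)).2 * (fderiv ℝ ψ p (0, 1)).1 := by
    have hkeq : (jac ψ p).det = (fderiv ℝ ψ p (1, 0)).1 * (fderiv ℝ ψ p (0, 1)).2 -
        (fderiv ℝ ψ p (1, 0)).2 * (fderiv ℝ ψ p (0, 1)).1 := by
      simp [jac, Matrix.det_fin_two_of]
      ring
    rwa [hkeq] at hJ
  have hkne : ((fderiv ℝ ψ p (1, 0)).1 * (fderiv ℝ ψ p (0, 1)).2 -
      (fderiv ℝ ψ p (1, 0)).2 * (fderiv ℝ ψ p (0, 1)).1) ≠ 0 := ne_of_gt hkpos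
  have hk2 : ((fderiv ℝ ψ p (1, 0)).1 * (fderiv ℝ ψ p (0, 1)).2 -
      (fderiv ℝ ψ p (1, 0)).2 * (fderiv ℝ ψ p (0, 1)).1) ^ 2 ≠ 0 := pow_ne_zero 2 hkne
  -- first derivatives transform
  have hu : mvec A (pt x p) = (fderiv ℝ ψ p (1, 0)).1 • pt x (ψ p) +
      (fderiv ℝ ψ p (1, 0)).2 • ps x (ψ p) := by
    show mvec A (fderiv ℝ x p (1, 0)) = _
    rw [hD1' p (1, 0), fderiv_apply_decomp]
  have hv : mvec A (ps x p) = (fderiv ℝ ψ p (0, 1)).1 • pt x (ψ p) +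
      (fderiv ℝ ψ p (0, 1)).2 • ps x (ψ p) := by
    show mvec A (fderiv ℝ x p (0, 1)) = _
    rw [hD1' p (0, 1), fderiv_apply_decomp]
  -- cross product transforms
  have hcr : mvec A (cross (pt x p) (ps x p)) =
      (A.det * ((fderiv ℝ ψ p (1, 0)).1 * (fderiv ℝ ψ p (0, 1)).2 -
        (fderiv ℝ ψ p (1, 0)).2 * (fderiv ℝ ψ p (0, 1)).1)) •
        cross (pt x (ψ p)) (ps x (ψ p)) := by
    have h5 := cross_mvec hA (pt x p) (ps x p)
    rw [hu, hv, cross_comb] at h5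
    have h6 := congrArg (fun w : E3 => A.det • w) h5
    simp only [smul_smul] at h6
    rw [← sq, hdet2, one_smul] at h6
    exact h6.symm
  have hcne : ‖cross (pt x (ψ p)) (ps x (ψ p))‖ ≠ 0 := norm_ne_zero_iff.mpr hreg'
  have hnorm : ‖cross (pt x p) (ps x p)‖ =
      ((fderiv ℝ ψ p (1, 0)).1 * (fderiv ℝ ψ p (0, 1)).2 -
        (fderiv ℝ ψ p (1, 0)).2 * (fderiv ℝ ψ p (0, 1)).1) *
        ‖cross (pt x (ψ p)) (ps x (ψ p))‖ := by
    rw [← norm_mvec hA (cross (pt x p) (ps x p)), hcr, norm_smul, Real.norm_eq_abs, abs_mul,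
      habs, one_mul, abs_of_pos hkpos]
  -- unit normal transforms
  have hAn : mvec A (nrm x p) = A.det • nrm x (ψ p) := by
    rw [nrm, nrm, mvec_smul, hcr, hnorm, smul_smul, smul_smul]
    congr 1
    field_simp
  -- first fundamental form transforms
  have hEp : coeffE x p =
      (fderiv ℝ ψ p (1, 0)).1 * (fderiv ℝ ψ p (1, 0)).1 * coeffE x (ψ p) +
      ((fderiv ℝ ψ p (1, 0)).1 * (fderiv ℝ ψ p (1, 0)).2 +
        (fderiv ℝ ψ p (1, 0)).2 * (fderiv ℝ ψ p (1, 0)).1) * coeffF x (ψ p) +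
      (fderiv ℝ ψ p (1, 0)).2 * (fderiv ℝ ψ p (1, 0)).2 * coeffG x (ψ p) := by
    simp only [coeffE, coeffF, coeffG]
    rw [← inner_mvec hA (pt x p) (pt x p), hu, inner_comb]
  have hFp : coeffF x p =
      (fderiv ℝ ψ p (1, 0)).1 * (fderiv ℝ ψ p (0, 1)).1 * coeffE x (ψ p) +
      ((fderiv ℝ ψ p (1, 0)).1 * (fderiv ℝ ψ p (0, 1)).2 +
        (fderiv ℝ ψ p (1, 0)).2 * (fderiv ℝ ψ p (0, 1)).1) * coeffF x (ψ p) +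
      (fderiv ℝ ψ p (1, 0)).2 * (fderiv ℝ ψ p (0, 1)).2 * coeffG x (ψ p) := by
    simp only [coeffE, coeffF, coeffG]
    rw [← inner_mvec hA (pt x p) (ps x p), hu, hv, inner_comb]
  have hGp : coeffG x p =
      (fderiv ℝ ψ p (0, 1)).1 * (fderiv ℝ ψ p (0, 1)).1 * coeffE x (ψ p) +
      ((fderiv ℝ ψ p (0, 1)).1 * (fderiv ℝ ψ p (0, 1)).2 +
        (fderiv ℝ ψ p (0, 1)).2 * (fderiv ℝ ψ p (0, 1)).1) * coeffF x (ψ p) +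
      (fderiv ℝ ψ p (0, 1)).2 * (fderiv ℝ ψ p (0, 1)).2 * coeffG x (ψ p) := by
    simp only [coeffE, coeffF, coeffG]
    rw [← inner_mvec hA (ps x p) (ps x p), hv, inner_comb]
  -- second fundamental form machinery
  have hsecond : ∀ z w : ℝ × ℝ,
      (inner ℝ (fderiv ℝ (fderiv ℝ x) (ψ p) z w) (nrm x (ψ p)) : ℝ) =
        z.1 * w.1 * coeffL x (ψ p) + (z.1 * w.2 + z.2 * w.1) * coeffM x (ψ p) +
          z.2 * w.2 * coeffN x (ψ p) := by
    have hsymm : ∀ v w : ℝ × ℝ, fderiv ℝ (fderiv ℝ x) (ψ p) v w =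
        fderiv ℝ (fderiv ℝ x) (ψ p) w v :=
      hx.contDiffAt.isSymmSndFDerivAt (by norm_num)
    have e11 : pt (pt x) (ψ p) = fderiv ℝ (fderiv ℝ x) (ψ p) (1, 0) (1, 0) := by
      show fderiv ℝ (fun q => fderiv ℝ x q (1, 0)) (ψ p) (1, 0) = _
      exact fderiv_eval x (ψ p) (hxd1 (ψ p)) (1, 0) (1, 0)
    have e21 : ps (pt x) (ψ p) = fderiv ℝ (fderiv ℝ x) (ψ p) (0, 1) (1, 0) := by
      show fderiv ℝ (fun q => fderiv ℝ x q (1, 0)) (ψ p) (0, 1) = _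
      exact fderiv_eval x (ψ p) (hxd1 (ψ p)) (0, 1) (1, 0)
    have e22 : ps (ps x) (ψ p) = fderiv ℝ (fderiv ℝ x) (ψ p) (0, 1) (0, 1) := by
      show fderiv ℝ (fun q => fderiv ℝ x q (0, 1)) (ψ p) (0, 1) = _
      exact fderiv_eval x (ψ p) (hxd1 (ψ p)) (0, 1) (0, 1)
    intro z w
    conv_lhs => rw [prod_decomp z, prod_decomp w]
    simp only [map_add, ContinuousLinearMap.map_smul, ContinuousLinearMap.add_apply,
      ContinuousLinearMap.coe_smul', Pi.smul_apply, inner_add_left, real_inner_smul_left]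
    rw [hsymm (1, 0) (0, 1)]
    rw [← e11, ← e21, ← e22]
    simp only [coeffL, coeffM, coeffN]
    ring
  have key : ∀ w₁ w₂ : ℝ × ℝ,
      (inner ℝ (fderiv ℝ (fun q => fderiv ℝ x q w₂) p w₁) (nrm x p) : ℝ) =
        A.det * inner ℝ (fderiv ℝ (fderiv ℝ x) (ψ p) (fderiv ℝ ψ p w₁) (fderiv ℝ ψ p w₂))
          (nrm x (ψ p)) := by
    intro w₁ w₂
    rw [← inner_mvec hA, hD2, hAn, inner_add_left, real_inner_smul_right, real_inner_smul_right,
      tangent_orth]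
    ring
  -- second fundamental form transforms
  have hLp : coeffL x p = A.det *
      ((fderiv ℝ ψ p (1, 0)).1 * (fderiv ℝ ψ p (1, 0)).1 * coeffL x (ψ p) +
        ((fderiv ℝ ψ p (1, 0)).1 * (fderiv ℝ ψ p (1, 0)).2 +
          (fderiv ℝ ψ p (1, 0)).2 * (fderiv ℝ ψ p (1, 0)).1) * coeffM x (ψ p) +
        (fderiv ℝ ψ p (1, 0)).2 * (fderiv ℝ ψ p (1, 0)).2 * coeffN x (ψ p)) := by
    have h0 : coeffL x p =
        inner ℝ (fderiv ℝ (fun q => fderiv ℝ x q (1, 0)) p (1, 0)) (nrm x p) := rfl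
    rw [h0, key (1, 0) (1, 0), hsecond]
  have hMp : coeffM x p = A.det *
      ((fderiv ℝ ψ p (0, 1)).1 * (fderiv ℝ ψ p (1, 0)).1 * coeffL x (ψ p) +
        ((fderiv ℝ ψ p (0, 1)).1 * (fderiv ℝ ψ p (1, 0)).2 +
          (fderiv ℝ ψ p (0, 1)).2 * (fderiv ℝ ψ p (1, 0)).1) * coeffM x (ψ p) +
        (fderiv ℝ ψ p (0, 1)).2 * (fderiv ℝ ψ p (1, 0)).2 * coeffN x (ψ p)) := by
    have h0 : coeffM x p =
        inner ℝ (fderiv ℝ (fun q => fderiv ℝ x q (1, 0)) p (0, 1)) (nrm x p) := rfl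
    rw [h0, key (0, 1) (1, 0), hsecond]
  have hNp : coeffN x p = A.det *
      ((fderiv ℝ ψ p (0, 1)).1 * (fderiv ℝ ψ p (0, 1)).1 * coeffL x (ψ p) +
        ((fderiv ℝ ψ p (0, 1)).1 * (fderiv ℝ ψ p (0, 1)).2 +
          (fderiv ℝ ψ p (0, 1)).2 * (fderiv ℝ ψ p (0, 1)).1) * coeffM x (ψ p) +
        (fderiv ℝ ψ p (0, 1)).2 * (fderiv ℝ ψ p (0, 1)).2 * coeffN x (ψ p)) := by
    have h0 : coeffN x p =
        inner ℝ (fderiv ℝ (fun q => fderiv ℝ x q (0, 1)) p (0, 1)) (nrm x p) := rfl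
    rw [h0, key (0, 1) (0, 1), hsecond]
  -- final polynomial identities
  have hnum : coeffL x p * coeffN x p - coeffM x p ^ 2 =
      ((fderiv ℝ ψ p (1, 0)).1 * (fderiv ℝ ψ p (0, 1)).2 -
        (fderiv ℝ ψ p (1, 0)).2 * (fderiv ℝ ψ p (0, 1)).1) ^ 2 *
        (coeffL x (ψ p) * coeffN x (ψ p) - coeffM x (ψ p) ^ 2) := by
    rw [hLp, hMp, hNp, sq_one_id _ _ _ hdet2]
    ring
  have hden : coeffE x p * coeffG x p - coeffF x p ^ 2 =
      ((fderiv ℝ ψ p (1, 0)).1 * (fderiv ℝ ψ p (0, 1)).2 -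
        (fderiv ℝ ψ p (1, 0)).2 * (fderiv ℝ ψ p (0, 1)).1) ^ 2 *
        (coeffE x (ψ p) * coeffG x (ψ p) - coeffF x (ψ p) ^ 2) := by
    rw [hEp, hFp, hGp]
    ring
  have hmnum : coeffE x p * coeffN x p + coeffG x p * coeffL x p -
      2 * coeffF x p * coeffM x p = A.det *
      (((fderiv ℝ ψ p (1, 0)).1 * (fderiv ℝ ψ p (0, 1)).2 -
        (fderiv ℝ ψ p (1, 0)).2 * (fderiv ℝ ψ p (0, 1)).1) ^ 2 *
        (coeffE x (ψ p) * coeffN x (ψ p) + coeffG x (ψ p) * coeffL x (ψ p) -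
          2 * coeffF x (ψ p) * coeffM x (ψ p))) := by
    rw [hEp, hFp, hGp, hLp, hMp, hNp]
    ring
  have hden2 : 2 * (coeffE x p * coeffG x p - coeffF x p ^ 2) =
      ((fderiv ℝ ψ p (1, 0)).1 * (fderiv ℝ ψ p (0, 1)).2 -
        (fderiv ℝ ψ p (1, 0)).2 * (fderiv ℝ ψ p (0, 1)).1) ^ 2 *
        (2 * (coeffE x (ψ p) * coeffG x (ψ p) - coeffF x (ψ p) ^ 2)) := by
    rw [hden]; ring
  constructor
  · simp only [gauss]
    rw [hnum, hden, mul_div_mul_left _ _ hk2]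
  · simp only [mean]
    rw [hmnum, hden2, mul_div_assoc, mul_div_mul_left _ _ hk2]
end
end

section
/- Let p, q ∈ ℝ[t,s] be relatively prime polynomials (every common divisor of p and q is a unit) with q ≠ 0, and let η ∈ ℝ[t,s,u] be a polynomial such that η(t₀, s₀, p(t₀,s₀)/q(t₀,s₀)) = 0 for every (t₀,s₀) ∈ ℝ² with q(t₀,s₀) ≠ 0. Then the polynomial q·u − p divides η in ℝ[t,s,u]. -/
open MvPolynomial

noncomputable def eq3 : MvPolynomial (Fin 3) ℝ ≃ₐ[ℝ] Polynomial (MvPolynomial (Fin 2) ℝ) :=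
  (renameEquiv ℝ finSuccEquivLast).trans (optionEquivLeft ℝ (Fin 2))

lemma eq3_rename (a : MvPolynomial (Fin 2) ℝ) :
    eq3 (rename (Fin.castSucc : Fin 2 → Fin 3) a) = Polynomial.C a := by
  induction a using MvPolynomial.induction_on with
  | C r => simp [eq3, optionEquivLeft_C]
  | add f g hf hg => simp only [map_add, hf, hg]
  | mul_X f i hf =>
    rw [map_mul, map_mul, hf, map_mul]
    congr 1
    show eq3 (rename _ (X i)) = Polynomial.C (X i)
    simp [eq3, finSuccEquivLast_castSucc, optionEquivLeft_X_some]

lemma eq3_X2 : eq3 (X 2) = Polynomial.X := by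
  have : (2 : Fin 3) = Fin.last 2 := rfl
  rw [this]; simp [eq3, finSuccEquivLast_last, optionEquivLeft_X_none]
  rw [show finSuccEquivLast (2 : Fin 3) = none from finSuccEquivLast_last, optionEquivLeft_X_none]

lemma eq3_eval (t₀ s₀ y : ℝ) (η : MvPolynomial (Fin 3) ℝ) :
    eval ![t₀, s₀, y] η
      = Polynomial.eval y ((eq3 η).map (eval ![t₀, s₀])) := by
  have : (eval ![t₀, s₀, y] : MvPolynomial (Fin 3) ℝ →+* ℝ)
      = ((Polynomial.evalRingHom y).comp
          (Polynomial.mapRingHom (eval ![t₀, s₀]))).comp (eq3 : MvPolynomial (Fin 3) ℝ ≃ₐ[ℝ] _) := by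
    apply MvPolynomial.ringHom_ext
    · intro r; simp [eq3, optionEquivLeft_C]
    · intro i
      fin_cases i
      · show (MvPolynomial.eval ![t₀, s₀, y]) (X 0) = (((Polynomial.evalRingHom y).comp (Polynomial.mapRingHom (eval ![t₀, s₀]))).comp (eq3 : MvPolynomial (Fin 3) ℝ →+* _)) (X 0)
        rw [show (X (0:Fin 3) : MvPolynomial (Fin 3) ℝ) = rename (Fin.castSucc : Fin 2 → Fin 3) (X 0) by rw [rename_X]; rfl]
        rw [RingHom.comp_apply, RingHom.comp_apply, RingHom.coe_coe, eq3_rename]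
        simp
      · show (MvPolynomial.eval ![t₀, s₀, y]) (X 1) = (((Polynomial.evalRingHom y).comp (Polynomial.mapRingHom (eval ![t₀, s₀]))).comp (eq3 : MvPolynomial (Fin 3) ℝ →+* _)) (X 1)
        rw [show (X (1:Fin 3) : MvPolynomial (Fin 3) ℝ) = rename (Fin.castSucc : Fin 2 → Fin 3) (X 1) by rw [rename_X]; rfl]
        rw [RingHom.comp_apply, RingHom.comp_apply, RingHom.coe_coe, eq3_rename]
        simp
      · show (MvPolynomial.eval ![t₀, s₀, y]) (X 2) = (((Polynomial.evalRingHom y).comp (Polynomial.mapRingHom (eval ![t₀, s₀]))).comp (eq3 : MvPolynomial (Fin 3) ℝ →+* _)) (X 2)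
        simp [eq3_X2]
  exact DFunLike.congr_fun this η

/-- Study's Lemma argument: if `η(t₀, s₀, p(t₀,s₀)/q(t₀,s₀)) = 0`
whenever `q(t₀,s₀) ≠ 0`, and `p, q` are relatively prime with `q ≠ 0`,
then `q·u − p` divides `η` in `ℝ[t,s,u]`. -/
theorem dvd_of_vanishing_on_graph
    (p q : MvPolynomial (Fin 2) ℝ) (hpq : IsRelPrime p q) (hq : q ≠ 0)
    (η : MvPolynomial (Fin 3) ℝ)
    (hη : ∀ t₀ s₀ : ℝ, eval ![t₀, s₀] q ≠ 0 →
      eval ![t₀, s₀, eval ![t₀, s₀] p / eval ![t₀, s₀] q] η = 0) :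
    rename (Fin.castSucc : Fin 2 → Fin 3) q * X 2 -
      rename (Fin.castSucc : Fin 2 → Fin 3) p ∣ η := by
  classical
  set η' : Polynomial (MvPolynomial (Fin 2) ℝ) := eq3 η with hη'
  set d : ℕ := η'.natDegree with hd
  set f : Polynomial (MvPolynomial (Fin 2) ℝ) :=
    Polynomial.C q * Polynomial.X - Polynomial.C p with hf
  -- Step A : the cleared-denominator polynomial vanishes
  set ζ : MvPolynomial (Fin 2) ℝ :=
    ∑ k ∈ Finset.range (d + 1), η'.coeff k * p ^ k * q ^ (d - k) with hζ
  have hζq : ζ * q = 0 := by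
    apply MvPolynomial.funext
    intro x
    have hx : x = ![x 0, x 1] := by
      funext i; fin_cases i <;> rfl
    rw [map_mul, map_zero, hx]
    by_cases hq0 : eval ![x 0, x 1] q = 0
    · rw [hq0, mul_zero]
    · have hev : eval ![x 0, x 1] ζ =
          (eval ![x 0, x 1] q) ^ d *
            Polynomial.eval (eval ![x 0, x 1] p / eval ![x 0, x 1] q)
              (η'.map (eval ![x 0, x 1])) := by
        rw [hζ, map_sum, Polynomial.eval_eq_sum_range'
          (lt_of_le_of_lt Polynomial.natDegree_map_le (Nat.lt_succ_self d)), Finset.mul_sum]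
        apply Finset.sum_congr rfl
        intro k hk
        rw [Finset.mem_range, Nat.lt_succ_iff] at hk
        rw [Polynomial.coeff_map, map_mul, map_mul, map_pow, map_pow, div_pow,
          pow_sub₀ _ hq0 hk]
        field_simp
      have h0 : Polynomial.eval (eval ![x 0, x 1] p / eval ![x 0, x 1] q)
          (η'.map (eval ![x 0, x 1])) = 0 := by
        have := hη (x 0) (x 1) hq0
        rw [eq3_eval] at this
        exact this
      rw [hev, h0, mul_zero, zero_mul]
  have hζ0 : ζ = 0 := by
    rcases mul_eq_zero.mp hζq with h | h
    · exact h
    · exact absurd h hq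
  -- Step B : root in the fraction field
  set φ : MvPolynomial (Fin 2) ℝ →+* FractionRing (MvPolynomial (Fin 2) ℝ) :=
    algebraMap _ _ with hφ
  have hφinj : Function.Injective φ := IsFractionRing.injective _ _
  have hφq : φ q ≠ 0 := fun h => hq (hφinj (by simpa using h))
  have hroot : Polynomial.eval (φ p / φ q) (η'.map φ) = 0 := by
    have key : (φ q) ^ d * Polynomial.eval (φ p / φ q) (η'.map φ) = φ ζ := by
      rw [Polynomial.eval_eq_sum_range'
        (lt_of_le_of_lt Polynomial.natDegree_map_le (Nat.lt_succ_self d)), Finset.mul_sum,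
        hζ, map_sum]
      apply Finset.sum_congr rfl
      intro k hk
      rw [Finset.mem_range, Nat.lt_succ_iff] at hk
      rw [Polynomial.coeff_map, map_mul, map_mul, map_pow, map_pow, div_pow,
        pow_sub₀ _ hφq hk]
      field_simp
    have h2 : (φ q) ^ d * Polynomial.eval (φ p / φ q) (η'.map φ) = 0 := by
      rw [key, hζ0, map_zero]
    exact (mul_eq_zero.mp h2).resolve_left (pow_ne_zero d hφq)
  -- Step C : divisibility in K[X]
  have hdvdK : f.map φ ∣ η'.map φ := by
    have h1 : (Polynomial.X - Polynomial.C (φ p / φ q)) ∣ η'.map φ :=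
      Polynomial.dvd_iff_isRoot.mpr hroot
    have h2 : f.map φ = Polynomial.C (φ q) * (Polynomial.X - Polynomial.C (φ p / φ q)) := by
      rw [hf, Polynomial.map_sub, Polynomial.map_mul, Polynomial.map_C, Polynomial.map_C,
        Polynomial.map_X, mul_sub, ← Polynomial.C_mul, mul_div_cancel₀ _ hφq]
    rw [h2]
    exact (IsUnit.mul_left_dvd (Polynomial.isUnit_C.mpr hφq.isUnit)).mpr h1
  -- Step D : f is primitive
  have hprim : f.IsPrimitive := by
    intro r hr
    rw [Polynomial.C_dvd_iff_dvd_coeff] at hr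
    have h1 := hr 1
    have h0 := hr 0
    rw [show f.coeff 1 = q by rw [hf]; simp] at h1
    rw [show f.coeff 0 = -p by rw [hf]; simp, dvd_neg] at h0
    exact hpq h0 h1
  -- Step E : f is prime
  have hdegf : f.degree = 1 := by
    rw [hf, sub_eq_add_neg, ← Polynomial.C_neg]
    exact Polynomial.degree_linear hq
  have hirrK : Irreducible (f.map φ) := by
    apply Polynomial.irreducible_of_degree_eq_one
    rw [Polynomial.degree_map_eq_of_injective hφinj, hdegf]
  have hirr : Irreducible f :=
    hprim.irreducible_of_irreducible_map_of_injective hφinj hirrK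
  have hfprime : Prime f := (UniqueFactorizationMonoid.irreducible_iff_prime).mp hirr
  -- Step F : from K[X] divisibility to A[X] divisibility
  obtain ⟨h, hh⟩ := hdvdK
  obtain ⟨⟨s, hs0⟩, hs⟩ :=
    IsLocalization.integerNormalization_map_to_map (nonZeroDivisors (MvPolynomial (Fin 2) ℝ)) h
  have hs' : (IsLocalization.integerNormalization (nonZeroDivisors (MvPolynomial (Fin 2) ℝ)) h).map φ
      = Polynomial.C (φ s) * h := by
    rw [hs, Algebra.smul_def, Polynomial.algebraMap_apply]
  have hsne : s ≠ 0 := nonZeroDivisors.ne_zero hs0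
  have heq : Polynomial.C s * η'
      = f * IsLocalization.integerNormalization (nonZeroDivisors (MvPolynomial (Fin 2) ℝ)) h := by
    apply Polynomial.map_injective φ hφinj
    rw [Polynomial.map_mul, Polynomial.map_mul, hs', Polynomial.map_C, hh]
    ring
  have hfdvd : f ∣ η' := by
    have hd1 : f ∣ Polynomial.C s * η' := ⟨_, heq⟩
    rcases hfprime.dvd_mul.mp hd1 with h1 | h1
    · exfalso
      have hle := Polynomial.degree_le_of_dvd h1 (by
        simpa [Polynomial.C_eq_zero] using hsne)
      rw [hdegf, Polynomial.degree_C hsne] at hle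
      exact absurd hle (by norm_num)
    · exact h1
  -- Step G : transfer back
  have hF : eq3 (rename (Fin.castSucc : Fin 2 → Fin 3) q * X 2 -
      rename (Fin.castSucc : Fin 2 → Fin 3) p) = f := by
    rw [map_sub, map_mul, eq3_rename, eq3_rename, eq3_X2, hf]
  have hfin := map_dvd
    (eq3.symm : Polynomial (MvPolynomial (Fin 2) ℝ) ≃ₐ[ℝ] MvPolynomial (Fin 3) ℝ) hfdvd
  rw [← hF, hη'] at hfin
  simpa using hfin
end

section
/- Let u, v : ℝ → ℝ³ be differentiable maps such that v(t) × v'(t) ≠ 0 for all t, let A be a real orthogonal 3×3 matrix and b ∈ ℝ³, and set ũ(t) = A·u(t) + b and ṽ(t) = A·v(t). Then ṽ(t) × ṽ'(t) ≠ 0 for all t, and the line of striction transforms equivariantly: c[ũ,ṽ](t) = A·c[u,v](t) + b for all t. (In particular, a Euclidean symmetry f(x) = Ax + b carrying the ruled parametrization u(t) + s·v(t) to ũ(t) + s·ṽ(t) maps the line of striction of the first onto the line of striction of the second.) -/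
open Matrix

noncomputable section

/-- The line of striction of the ruled parametrization `x(t,s) = u(t) + s·v(t)`. -/
def striction (u v : ℝ → E3) (t : ℝ) : E3 :=
  u t - ((inner ℝ (cross (v t) (deriv v t)) (cross (v t) (deriv u t)) : ℝ) /
    ‖cross (v t) (deriv v t)‖ ^ 2) • v t

lemma cross_mulVec_adj (A : Matrix (Fin 3) (Fin 3) ℝ) (x y : Fin 3 → ℝ) :
    crossProduct (A.mulVec x) (A.mulVec y) = (A.adjugate)ᵀ.mulVec (crossProduct x y) := by
  funext i
  fin_cases i <;>
    simp [crossProduct, Matrix.mulVec, Matrix.adjugate_fin_three, dotProduct,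
      Fin.sum_univ_three] <;> ring

lemma adjT_eq (A : Matrix (Fin 3) (Fin 3) ℝ) (hA : Aᵀ * A = 1) : A.adjugate ᵀ = A.det • A := by
  have hinv : A⁻¹ = Aᵀ := Matrix.inv_eq_left_inv hA
  have hdet : A.det * A.det = 1 := by
    have := congrArg Matrix.det hA
    simpa [Matrix.det_transpose, mul_comm] using this
  have hu : IsUnit A.det := IsUnit.of_mul_eq_one _ hdet
  have h1 : A.adjugate = A.det • A⁻¹ := by
    rw [Matrix.inv_def, smul_smul, Ring.mul_inverse_cancel _ hu, one_smul]
  rw [h1, hinv, Matrix.transpose_smul, Matrix.transpose_transpose]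

lemma dot_pres (A : Matrix (Fin 3) (Fin 3) ℝ) (hA : Aᵀ * A = 1) (x y : Fin 3 → ℝ) :
    A.mulVec x ⬝ᵥ A.mulVec y = x ⬝ᵥ y := by
  rw [Matrix.dotProduct_mulVec, ← Matrix.vecMul_transpose, Matrix.vecMul_vecMul, hA,
    Matrix.vecMul_one]

def mvecL (A : Matrix (Fin 3) (Fin 3) ℝ) : E3 →L[ℝ] E3 :=
  LinearMap.toContinuousLinearMap
    { toFun := mvec A
      map_add' := fun x y => by
        ext i; simp [mvec, Matrix.mulVec_add]
      map_smul' := fun c x => by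
        ext i; simp [mvec, Matrix.mulVec_smul] }

lemma mvecL_apply (A : Matrix (Fin 3) (Fin 3) ℝ) (x : E3) : mvecL A x = mvec A x := rfl

lemma deriv_mvec (A : Matrix (Fin 3) (Fin 3) ℝ) (w : ℝ → E3) (hw : Differentiable ℝ w)
    (t : ℝ) : deriv (fun τ => mvec A (w τ)) t = mvec A (deriv w t) := by
  have h := ((mvecL A).hasFDerivAt.comp_hasDerivAt t (hw t).hasDerivAt)
  exact h.deriv


/-- the line of striction transforms equivariantly under a
Euclidean symmetry `f(x) = A·x + b`. -/
theorem striction_equivariant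
    (u v : ℝ → E3) (hu : Differentiable ℝ u) (hv : Differentiable ℝ v)
    (hreg : ∀ t : ℝ, cross (v t) (deriv v t) ≠ 0)
    (A : Matrix (Fin 3) (Fin 3) ℝ) (hA : Aᵀ * A = 1) (b : E3) :
    (∀ t : ℝ, cross ((fun τ => mvec A (v τ)) t)
        (deriv (fun τ => mvec A (v τ)) t) ≠ 0) ∧
    (∀ t : ℝ, striction (fun τ => mvec A (u τ) + b) (fun τ => mvec A (v τ)) t =
        mvec A (striction u v t) + b) := by
  have hdet : A.det * A.det = 1 := by
    have := congrArg Matrix.det hA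
    simpa [Matrix.det_transpose, mul_comm] using this
  have hdet0 : A.det ≠ 0 := fun h => by simp [h] at hdet
  -- injectivity of mulVec
  have hmvec0 : ∀ x : E3, mvec A x = 0 → x = 0 := by
    intro x hx
    have : Aᵀ.mulVec (A.mulVec x) = Aᵀ.mulVec 0 := by
      exact congrArg (fun z : E3 => Aᵀ.mulVec z.ofLp) hx
    have h' : x.ofLp = 0 := by simpa [Matrix.mulVec_mulVec, hA] using this
    simpa using congrArg (WithLp.toLp 2) h'
  -- cross equivariance
  have hcross : ∀ x y : E3, cross (mvec A x) (mvec A y) = A.det • mvec A (cross x y) := by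
    intro x y
    have h := cross_mulVec_adj A x y
    rw [adjT_eq A hA] at h
    ext i
    have := congrFun h i
    simpa [cross, mvec, Matrix.smul_mulVec] using this
  -- inner equals dotProduct
  have hinner : ∀ x y : E3, (inner ℝ x y : ℝ) = (x : Fin 3 → ℝ) ⬝ᵥ y := by
    intro x y
    simp [PiLp.inner_apply, dotProduct, mul_comm]
  -- deriv facts
  have hderivu : ∀ t, deriv (fun τ => mvec A (u τ) + b) t = mvec A (deriv u t) := by
    intro t
    have h := (((mvecL A).hasFDerivAt.comp_hasDerivAt t (hu t).hasDerivAt).add_const b)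
    exact h.deriv
  have hderivv : ∀ t, deriv (fun τ => mvec A (v τ)) t = mvec A (deriv v t) :=
    deriv_mvec A v hv
  constructor
  · intro t
    rw [hderivv t, hcross]
    intro h
    apply hreg t
    have h2 : mvec A (cross (v t) (deriv v t)) = 0 := by
      have := smul_eq_zero.mp h
      tauto
    exact hmvec0 _ h2
  · intro t
    set w1 := cross (v t) (deriv v t) with hw1
    set w2 := cross (v t) (deriv u t) with hw2
    -- equate the scalar coefficient
    have hinner_pres : ∀ x y : E3, (inner ℝ (mvec A x) (mvec A y) : ℝ) = inner ℝ x y := by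
      intro x y
      rw [hinner, hinner]
      exact dot_pres A hA x y
    have hc1 : cross ((fun τ => mvec A (v τ)) t) (deriv (fun τ => mvec A (v τ)) t)
        = A.det • mvec A w1 := by
      rw [hderivv t, hcross]
    have hc2 : cross ((fun τ => mvec A (v τ)) t) (deriv (fun τ => mvec A (u τ) + b) t)
        = A.det • mvec A w2 := by
      rw [hderivu t, hcross]
    have hin : (inner ℝ (A.det • mvec A w1) (A.det • mvec A w2) : ℝ) = inner ℝ w1 w2 := by
      rw [real_inner_smul_left, real_inner_smul_right, hinner_pres, ← mul_assoc, hdet,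
        one_mul]
    have hnrm : ‖(A.det • mvec A w1 : E3)‖ ^ 2 = ‖w1‖ ^ 2 := by
      rw [← real_inner_self_eq_norm_sq, ← real_inner_self_eq_norm_sq,
        real_inner_smul_left, real_inner_smul_right, hinner_pres, ← mul_assoc, hdet,
        one_mul]
    simp only [striction, hc1, hc2, hin, hnrm]
    -- now linearity
    rw [← hw1, ← hw2]
    conv_rhs => rw [← mvecL_apply, map_sub, _root_.map_smul, mvecL_apply, mvecL_apply]
    abel
end
end
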